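/- arXiv:2509.02535 — 2 statements merged into one kernel-verified Lean document; each statement's English description precedes it below -/
import Mathlib

section
/- Let p̂ : {0,1}^4 → ℝ be the joint distribution of (X, Z, Y, S) induced by some reduced SCM, and suppose p̂(X = x, Z = z) > 0 and p̂(S = s, X = x) > 0 for all x, z, s ∈ {0,1}. Let γ = p̂(S = 1). Then the set of values of PNS = P(Y_{X=1} = 1 and Y_{X=0} = 0) attained by reduced SCMs whose induced joint distribution of (X, Z, Y, S) equals p̂ is exactly the set of values of the bilinear objective (q1_1 + q1_5)·h1 + (q1_2 + q1_6)·h2 as (q1, q2) ranges over the feasible region: q1 ∈ ℝ^8 and q2 ∈ ℝ^16 nonnegative, each summing to 1, satisfying for all x, y, z ∈ {0,1} the constraint Σ_{j with fX(j) = x and fY(z, j) = y} q1_j = p̂(Y = y | X = x, Z = z) · p̂(X = x), and for all s, x, z ∈ {0,1} the constraint Σ_{k with fZ(s, x, k) = z} q2_k = p̂(Z = z | S = s, X = x), where h1 = (1−γ)(q2_4 + q2_5 + q2_6 + q2_7) + γ(q2_1 + q2_5 + q2_9 + q2_13) and h2 = (1−γ)(q2_8 + q2_9 + q2_10 + q2_11)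 + γ(q2_2 + q2_6 + q2_10 + q2_14). -/
open Finset

attribute [local instance] Classical.propDecidable

/-- A reduced SCM as in the paper (with its exogenous types bundled):
exogenous `U1`, `U2`, a parameter `γ` for the binary pre-treatment variable
`S`, and mechanisms `fX`, `fZ`, `fY`. -/
structure ReducedSCM where
  U1 : Type
  U2 : Type
  [fin1 : Fintype U1]
  [fin2 : Fintype U2]
  p1 : U1 → ℝ
  p2 : U2 → ℝ
  gamma : ℝ
  p1_nonneg : ∀ u, 0 ≤ p1 u
  p2_nonneg : ∀ u, 0 ≤ p2 u
  p1_sum : ∑ u, p1 u = 1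
  p2_sum : ∑ u, p2 u = 1
  gamma_nonneg : 0 ≤ gamma
  gamma_le_one : gamma ≤ 1
  fX : U1 → Bool
  fZ : Bool → Bool → U2 → Bool
  fY : Bool → U1 → Bool

attribute [instance] ReducedSCM.fin1 ReducedSCM.fin2

namespace ReducedSCM

/-- Probability of a unit `(u1, u2, s)`. -/
def w (M : ReducedSCM) (u : M.U1 × M.U2 × Bool) : ℝ :=
  M.p1 u.1 * M.p2 u.2.1 * (if u.2.2 then M.gamma else 1 - M.gamma)

/-- Probability of an event. -/
noncomputable def P (M : ReducedSCM) (E : M.U1 × M.U2 × Bool → Prop) : ℝ :=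
  ∑ u, if E u then M.w u else 0

def S (M : ReducedSCM) (u : M.U1 × M.U2 × Bool) : Bool := u.2.2

def X (M : ReducedSCM) (u : M.U1 × M.U2 × Bool) : Bool := M.fX u.1

def Z (M : ReducedSCM) (u : M.U1 × M.U2 × Bool) : Bool := M.fZ (M.S u) (M.X u) u.2.1

def Y (M : ReducedSCM) (u : M.U1 × M.U2 × Bool) : Bool := M.fY (M.Z u) u.1

/-- Potential outcome `Y_{X=x}`. -/
def Yx (M : ReducedSCM) (x : Bool) (u : M.U1 × M.U2 × Bool) : Bool :=
  M.fY (M.fZ (M.S u) x u.2.1) u.1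

/-- Probability of necessity `PN = P(Y_{X=0} = 0, X = 1, Y = 1) / P(X = 1, Y = 1)`. -/
noncomputable def PN (M : ReducedSCM) : ℝ :=
  M.P (fun u => M.Yx false u = false ∧ M.X u = true ∧ M.Y u = true)
    / M.P (fun u => M.X u = true ∧ M.Y u = true)

/-- Probability of necessity and sufficiency `PNS = P(Y_{X=1} = 1, Y_{X=0} = 0)`. -/
noncomputable def PNS (M : ReducedSCM) : ℝ :=
  M.P (fun u => M.Yx true u = true ∧ M.Yx false u = false)

end ReducedSCM

/-- Canonical mechanism for `X`: `fX(j) = 1` iff `j ≥ 4`. -/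
def fXc (j : Fin 8) : Bool := decide (4 ≤ (j : ℕ))

/-- Canonical mechanism for `Y`: by the value of `j mod 4`, `Y` is `0`, `z`,
`1 - z`, or `1`. -/
def fYc (z : Bool) (j : Fin 8) : Bool :=
  if (j : ℕ) % 4 = 0 then false
  else if (j : ℕ) % 4 = 1 then z
  else if (j : ℕ) % 4 = 2 then !z
  else true

/-- Canonical mechanism for `Z`: writing `k = 8·b0 + 4·b1 + 2·b2 + b3`,
`fZ(s, x, k) = b_{2s+x}`. -/
def fZc (s x : Bool) (k : Fin 16) : Bool :=
  Nat.testBit (k : ℕ) (3 - (2 * s.toNat + x.toNat))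

/-- `h1 = (1−γ)(q2_4 + q2_5 + q2_6 + q2_7) + γ(q2_1 + q2_5 + q2_9 + q2_13)`. -/
def h1 (q2 : Fin 16 → ℝ) (γ : ℝ) : ℝ :=
  (1 - γ) * (q2 4 + q2 5 + q2 6 + q2 7) + γ * (q2 1 + q2 5 + q2 9 + q2 13)

/-- `h2 = (1−γ)(q2_8 + q2_9 + q2_10 + q2_11) + γ(q2_2 + q2_6 + q2_10 + q2_14)`. -/
def h2 (q2 : Fin 16 → ℝ) (γ : ℝ) : ℝ :=
  (1 - γ) * (q2 8 + q2 9 + q2 10 + q2 11) + γ * (q2 2 + q2 6 + q2 10 + q2 14)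

/-- Probability that a distribution `p̂` on `(x, z, y, s) ∈ {0,1}^4` assigns to
an event. -/
noncomputable def phatP (phat : Bool × Bool × Bool × Bool → ℝ)
    (E : Bool × Bool × Bool × Bool → Prop) : ℝ :=
  ∑ v, if E v then phat v else 0

/-- Conditional probability `p̂(A | B)`. -/
noncomputable def phatCond (phat : Bool × Bool × Bool × Bool → ℝ)
    (A B : Bool × Bool × Bool × Bool → Prop) : ℝ :=
  phatP phat (fun v => A v ∧ B v) / phatP phat B

/-- A reduced SCM induces `p̂` as the joint distribution of `(X, Z, Y, S)`. -/
def ReducedSCM.induces (M : ReducedSCM)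
    (phat : Bool × Bool × Bool × Bool → ℝ) : Prop :=
  ∀ x z y s : Bool,
    M.P (fun u => M.X u = x ∧ M.Z u = z ∧ M.Y u = y ∧ M.S u = s)
      = phat (x, z, y, s)

/-- The feasible region of the multilinear program: `q1 ∈ ℝ^8` and `q2 ∈ ℝ^16`
nonnegative, each summing to `1`, satisfying the linear constraints
`Σ_{j : fX(j) = x, fY(z, j) = y} q1_j = p̂(Y = y | X = x, Z = z) · p̂(X = x)` and
`Σ_{k : fZ(s, x, k) = z} q2_k = p̂(Z = z | S = s, X = x)`. -/
def feasible (phat : Bool × Bool × Bool × Bool → ℝ)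
    (q1 : Fin 8 → ℝ) (q2 : Fin 16 → ℝ) : Prop :=
  (∀ j, 0 ≤ q1 j) ∧ (∑ j, q1 j = 1) ∧ (∀ k, 0 ≤ q2 k) ∧ (∑ k, q2 k = 1) ∧
  (∀ x y z : Bool,
    (∑ j : Fin 8, if fXc j = x ∧ fYc z j = y then q1 j else 0)
      = phatCond phat (fun v => v.2.2.1 = y) (fun v => v.1 = x ∧ v.2.1 = z)
        * phatP phat (fun v => v.1 = x)) ∧
  (∀ s x z : Bool,
    (∑ k : Fin 16, if fZc s x k = z then q2 k else 0)
      = phatCond phat (fun v => v.2.1 = z) (fun v => v.2.2.2 = s ∧ v.1 = x))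


section Aux

open Finset

/-- weight for S -/
def gW (γ : ℝ) (s : Bool) : ℝ := if s then γ else 1 - γ

lemma sum_mul3 {α β γ' : Type} [Fintype α] [Fintype β] [Fintype γ']
    (f : α → ℝ) (g : β → ℝ) (h : γ' → ℝ) :
    ∑ u : α × β × γ', f u.1 * g u.2.1 * h u.2.2
      = (∑ a, f a) * (∑ b, g b) * (∑ c, h c) := by
  rw [Fintype.sum_prod_type]
  have h1 : ∀ a, ∑ u : β × γ', f a * g u.1 * h u.2 = f a * ((∑ b, g b) * (∑ c, h c)) := by
    intro a
    rw [Fintype.sum_prod_type]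
    simp_rw [mul_assoc, ← Finset.mul_sum]
    rw [← Finset.sum_mul]
  simp_rw [h1, ← Finset.sum_mul, mul_assoc]

lemma sum_ite_prod3 {α β γ' : Type} [Fintype α] [Fintype β] [Fintype γ']
    (P : α → Prop) (Q : β → Prop) (R : γ' → Prop)
    [DecidablePred P] [DecidablePred Q] [DecidablePred R]
    (f : α → ℝ) (g : β → ℝ) (h : γ' → ℝ) :
    ∑ u : α × β × γ', (if P u.1 ∧ Q u.2.1 ∧ R u.2.2 then f u.1 * g u.2.1 * h u.2.2 else 0)
      = (∑ a, if P a then f a else 0) * (∑ b, if Q b then g b else 0)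
        * (∑ c, if R c then h c else 0) := by
  have hpt : ∀ u : α × β × γ',
      (if P u.1 ∧ Q u.2.1 ∧ R u.2.2 then f u.1 * g u.2.1 * h u.2.2 else 0)
        = (if P u.1 then f u.1 else 0) * (if Q u.2.1 then g u.2.1 else 0)
          * (if R u.2.2 then h u.2.2 else 0) := by
    rintro ⟨a, b, c⟩
    by_cases hP : P a <;> by_cases hQ : Q b <;> by_cases hR : R c <;> simp [hP, hQ, hR]
  simp_rw [hpt]
  exact sum_mul3 (fun a => if P a then f a else 0) (fun b => if Q b then g b else 0)
    (fun c => if R c then h c else 0)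

lemma sum_fiber {α β : Type} [Fintype α] [Fintype β] [DecidableEq β]
    (t : α → β) (p : α → ℝ) (C : β → Prop) [DecidablePred C] :
    (∑ b, if C b then (∑ a, if t a = b then p a else 0) else 0)
      = ∑ a, if C (t a) then p a else 0 := by
  have hpt : ∀ b, (if C b then (∑ a, if t a = b then p a else 0) else 0)
      = ∑ a, if t a = b then (if C b then p a else 0) else 0 := by
    intro b
    by_cases hC : C b <;> simp [hC]
  simp_rw [hpt]
  rw [Finset.sum_comm]
  congr 1
  funext a
  have heq : ∀ b, (if t a = b then (if C b then p a else 0) else 0)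
      = (if b = t a then (if C b then p a else 0) else 0) := by
    intro b; by_cases hb : t a = b
    · simp [hb]
    · simp [hb, Ne.symm hb]
  simp_rw [heq]
  rw [Finset.sum_ite_eq' Finset.univ (t a) (fun b => if C b then p a else 0)]
  simp

def idx3 (a b c : Bool) : Fin 8 :=
  ⟨4 * a.toNat + 2 * b.toNat + c.toNat, by cases a <;> cases b <;> cases c <;> decide⟩

def idx4 (b0 b1 b2 b3 : Bool) : Fin 16 :=
  ⟨8 * b0.toNat + 4 * b1.toNat + 2 * b2.toNat + b3.toNat, by
    cases b0 <;> cases b1 <;> cases b2 <;> cases b3 <;> decide⟩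

lemma fXc_idx3 : ∀ a b c : Bool, fXc (idx3 a b c) = a := by decide

lemma fYc_idx3 : ∀ (z a b c : Bool), fYc z (idx3 a b c) = cond z c b := by decide

lemma fZc_idx4 : ∀ (s x b0 b1 b2 b3 : Bool),
    fZc s x (idx4 b0 b1 b2 b3) = cond s (cond x b3 b2) (cond x b1 b0) := by decide


lemma objective_sum (q1 : Fin 8 → ℝ) (q2 : Fin 16 → ℝ) (γ : ℝ) :
    (∑ s : Bool, ∑ k : Fin 16, ∑ j : Fin 8,
      (if fYc (fZc s true k) j = true ∧ fYc (fZc s false k) j = false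
       then q1 j * q2 k * gW γ s else 0))
      = (q1 1 + q1 5) * h1 q2 γ + (q1 2 + q1 6) * h2 q2 γ := by
  have hJ : ∀ z1 z0 : Bool, (∑ j : Fin 8,
        if fYc z1 j = true ∧ fYc z0 j = false then q1 j else 0)
      = (if z1 = true ∧ z0 = false then q1 1 + q1 5
         else if z1 = false ∧ z0 = true then q1 2 + q1 6 else 0) := by
    intro z1 z0
    cases z1 <;> cases z0 <;>
      simp (config := { decide := true }) [Fin.sum_univ_eight] <;> ring
  have hinner : ∀ (s : Bool) (k : Fin 16), (∑ j : Fin 8,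
      (if fYc (fZc s true k) j = true ∧ fYc (fZc s false k) j = false
       then q1 j * q2 k * gW γ s else 0))
      = (if fZc s true k = true ∧ fZc s false k = false then q1 1 + q1 5
         else if fZc s true k = false ∧ fZc s false k = true then q1 2 + q1 6 else 0)
          * (q2 k * gW γ s) := by
    intro s k
    rw [← hJ, Finset.sum_mul]
    congr 1; funext j
    by_cases hc : fYc (fZc s true k) j = true ∧ fYc (fZc s false k) j = false
    · rw [if_pos hc, if_pos hc]; ring
    · rw [if_neg hc, if_neg hc, zero_mul]
  simp_rw [hinner]
  simp only [Fintype.sum_bool]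
  have hexp : ∀ f : Fin 16 → ℝ, ∑ k, f k
      = f 0 + f 1 + f 2 + f 3 + f 4 + f 5 + f 6 + f 7 + f 8 + f 9 + f 10 + f 11
        + f 12 + f 13 + f 14 + f 15 := by
    intro f
    open Fin.NatCast in
    have h := Fin.sum_univ_eq_sum_range (fun n : ℕ => f n) 16
    simp only [Fin.cast_val_eq_self] at h
    rw [h]
    simp [Finset.sum_range_succ]
  rw [hexp, hexp]
  simp (config := { decide := true }) only []
  norm_num [h1, h2, gW]
  ring


namespace ReducedSCM

/-- response-function weights for (X, Y) -/
noncomputable def Am (M : ReducedSCM) (x z y : Bool) : ℝ :=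
  ∑ u, if M.fX u = x ∧ M.fY z u = y then M.p1 u else 0

/-- response-function weights for Z -/
noncomputable def Bm (M : ReducedSCM) (s x z : Bool) : ℝ :=
  ∑ u, if M.fZ s x u = z then M.p2 u else 0

/-- marginal of X -/
noncomputable def am (M : ReducedSCM) (x : Bool) : ℝ :=
  ∑ u, if M.fX u = x then M.p1 u else 0

lemma P_factor (M : ReducedSCM) (x z y s : Bool) :
    M.P (fun u => M.X u = x ∧ M.Z u = z ∧ M.Y u = y ∧ M.S u = s)
      = M.Am x z y * gW M.gamma s * M.Bm s x z := by
  simp only [P, w, X, Z, Y, S, Am, Bm]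
  have hpt : ∀ u : M.U1 × M.U2 × Bool,
      (if (M.fX u.1 = x ∧ M.fZ u.2.2 (M.fX u.1) u.2.1 = z
            ∧ M.fY (M.fZ u.2.2 (M.fX u.1) u.2.1) u.1 = y ∧ u.2.2 = s)
        then M.p1 u.1 * M.p2 u.2.1 * (if u.2.2 = true then M.gamma else 1 - M.gamma) else 0)
      = (if M.fX u.1 = x ∧ M.fY z u.1 = y then M.p1 u.1 else 0)
        * (if M.fZ s x u.2.1 = z then M.p2 u.2.1 else 0)
        * (if u.2.2 = s then (if u.2.2 = true then M.gamma else 1 - M.gamma) else 0) := by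
    rintro ⟨u1, u2, sb⟩
    by_cases hs : sb = s
    · subst hs
      by_cases hx : M.fX u1 = x
      · by_cases hz : M.fZ sb x u2 = z
        · by_cases hy : M.fY z u1 = y
          · simp [hx, hz, hy]
          · simp [hx, hz, hy]
        · simp [hx, hz]
      · simp [hx]
    · simp [hs]
  refine Eq.trans (Finset.sum_congr rfl fun u _ => ?_) ((Finset.sum_congr rfl fun u _ => hpt u).trans ?_)
  · congr
  rw [sum_mul3 (fun u1 => if M.fX u1 = x ∧ M.fY z u1 = y then M.p1 u1 else 0)
      (fun u2 => if M.fZ s x u2 = z then M.p2 u2 else 0)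
      (fun sb => if sb = s then (if sb = true then M.gamma else 1 - M.gamma) else 0)]
  have h3 : (∑ c : Bool, if c = s then (if c = true then M.gamma else 1 - M.gamma) else 0)
      = gW M.gamma s := by
    rw [Finset.sum_ite_eq' Finset.univ s (fun c => if c = true then M.gamma else 1 - M.gamma)]
    simp [gW]
  rw [h3]
  ring

end ReducedSCM

lemma phatP_X (phat : Bool × Bool × Bool × Bool → ℝ) (x : Bool) :
    phatP phat (fun v => v.1 = x)
      = phat (x,false,false,false) + phat (x,false,false,true) + phat (x,false,true,false)
        + phat (x,false,true,true) + phat (x,true,false,false) + phat (x,true,false,true)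
        + phat (x,true,true,false) + phat (x,true,true,true) := by
  cases x <;> simp [phatP, Fintype.sum_prod_type, Fintype.sum_bool] <;> ring

lemma phatP_XZ (phat : Bool × Bool × Bool × Bool → ℝ) (x z : Bool) :
    phatP phat (fun v => v.1 = x ∧ v.2.1 = z)
      = phat (x,z,false,false) + phat (x,z,false,true) + phat (x,z,true,false)
        + phat (x,z,true,true) := by
  cases x <;> cases z <;> simp [phatP, Fintype.sum_prod_type, Fintype.sum_bool] <;> ring

lemma phatP_SX (phat : Bool × Bool × Bool × Bool → ℝ) (s x : Bool) :
    phatP phat (fun v => v.2.2.2 = s ∧ v.1 = x)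
      = phat (x,false,false,s) + phat (x,false,true,s) + phat (x,true,false,s)
        + phat (x,true,true,s) := by
  cases s <;> cases x <;> simp [phatP, Fintype.sum_prod_type, Fintype.sum_bool] <;> ring

lemma phatP_S (phat : Bool × Bool × Bool × Bool → ℝ) (s : Bool) :
    phatP phat (fun v => v.2.2.2 = s)
      = phat (false,false,false,s) + phat (false,false,true,s) + phat (false,true,false,s)
        + phat (false,true,true,s) + phat (true,false,false,s) + phat (true,false,true,s)
        + phat (true,true,false,s) + phat (true,true,true,s) := by
  cases s <;> simp [phatP, Fintype.sum_prod_type, Fintype.sum_bool] <;> ring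

lemma phatP_YXZ (phat : Bool × Bool × Bool × Bool → ℝ) (x z y : Bool) :
    phatP phat (fun v => v.2.2.1 = y ∧ (v.1 = x ∧ v.2.1 = z))
      = phat (x,z,y,false) + phat (x,z,y,true) := by
  cases x <;> cases z <;> cases y <;>
    simp [phatP, Fintype.sum_prod_type, Fintype.sum_bool] <;> ring

lemma phatP_ZSX (phat : Bool × Bool × Bool × Bool → ℝ) (s x z : Bool) :
    phatP phat (fun v => v.2.1 = z ∧ (v.2.2.2 = s ∧ v.1 = x))
      = phat (x,z,false,s) + phat (x,z,true,s) := by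
  cases s <;> cases x <;> cases z <;>
    simp [phatP, Fintype.sum_prod_type, Fintype.sum_bool] <;> ring

lemma key (phat : Bool × Bool × Bool × Bool → ℝ) (M : ReducedSCM) (h : M.induces phat)
    (hposXZ : ∀ x z : Bool, 0 < phatP phat (fun v => v.1 = x ∧ v.2.1 = z))
    (hposSX : ∀ s x : Bool, 0 < phatP phat (fun v => v.2.2.2 = s ∧ v.1 = x)) :
    (∀ x z y : Bool, M.Am x z y
        = phatCond phat (fun v => v.2.2.1 = y) (fun v => v.1 = x ∧ v.2.1 = z)
          * phatP phat (fun v => v.1 = x)) ∧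
    (∀ s x z : Bool, M.Bm s x z
        = phatCond phat (fun v => v.2.1 = z) (fun v => v.2.2.2 = s ∧ v.1 = x)) ∧
    (M.gamma = phatP phat (fun v => v.2.2.2 = true)) ∧
    (∀ x z y s : Bool, phat (x,z,y,s)
        = (phatCond phat (fun v => v.2.2.1 = y) (fun v => v.1 = x ∧ v.2.1 = z)
            * phatP phat (fun v => v.1 = x))
          * gW (phatP phat (fun v => v.2.2.2 = true)) s
          * phatCond phat (fun v => v.2.1 = z) (fun v => v.2.2.2 = s ∧ v.1 = x)) := by
  have k0 : ∀ x z y s : Bool, phat (x,z,y,s) = M.Am x z y * gW M.gamma s * M.Bm s x z :=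
    fun x z y s => (h x z y s).symm.trans (M.P_factor x z y s)
  have kA : ∀ x z : Bool, M.Am x z false + M.Am x z true = M.am x := by
    intro x z
    simp only [ReducedSCM.Am, ReducedSCM.am, ← Finset.sum_add_distrib]
    apply Finset.sum_congr rfl
    intro u _
    by_cases hx : M.fX u = x
    · cases hY : M.fY z u <;> simp [hx, hY]
    · simp [hx]
  have kB : ∀ s x : Bool, M.Bm s x false + M.Bm s x true = 1 := by
    intro s x
    simp only [ReducedSCM.Bm, ← Finset.sum_add_distrib]
    rw [← M.p2_sum]
    apply Finset.sum_congr rfl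
    intro u _
    cases hZ : M.fZ s x u <;> simp [hZ]
  have ka : M.am false + M.am true = 1 := by
    simp only [ReducedSCM.am, ← Finset.sum_add_distrib]
    rw [← M.p1_sum]
    apply Finset.sum_congr rfl
    intro u _
    cases hX : M.fX u <;> simp [hX]
  have kg : gW M.gamma false + gW M.gamma true = 1 := by simp [gW]
  have hAnn : ∀ x z y : Bool, 0 ≤ M.Am x z y := by
    intro x z y
    apply Finset.sum_nonneg
    intro u _
    by_cases hc : M.fX u = x ∧ M.fY z u = y <;> simp [hc, M.p1_nonneg u]
  have hBnn : ∀ s x z : Bool, 0 ≤ M.Bm s x z := by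
    intro s x z
    apply Finset.sum_nonneg
    intro u _
    by_cases hc : M.fZ s x u = z <;> simp [hc, M.p2_nonneg u]
  have hann : ∀ x : Bool, 0 ≤ M.am x := by
    intro x
    apply Finset.sum_nonneg
    intro u _
    by_cases hc : M.fX u = x <;> simp [hc, M.p1_nonneg u]
  have hgnn : ∀ s : Bool, 0 ≤ gW M.gamma s := by
    intro s
    cases s <;> simp [gW, M.gamma_nonneg] <;> linarith [M.gamma_le_one]
  -- marginals
  have m1 : ∀ x : Bool, phatP phat (fun v => v.1 = x) = M.am x := by
    intro x
    rw [phatP_X phat x, k0, k0, k0, k0, k0, k0, k0, k0]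
    linear_combination (gW M.gamma false * M.Bm false x false
        + gW M.gamma true * M.Bm true x false) * kA x false
      + (gW M.gamma false * M.Bm false x true + gW M.gamma true * M.Bm true x true) * kA x true
      + M.am x * gW M.gamma false * kB false x + M.am x * gW M.gamma true * kB true x
      + M.am x * kg
  have m2 : ∀ x z : Bool, phatP phat (fun v => v.1 = x ∧ v.2.1 = z)
      = M.am x * (gW M.gamma false * M.Bm false x z + gW M.gamma true * M.Bm true x z) := by
    intro x z
    rw [phatP_XZ phat x z, k0, k0, k0, k0]
    linear_combination (gW M.gamma false * M.Bm false x z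
        + gW M.gamma true * M.Bm true x z) * kA x z
  have m3 : ∀ s x : Bool, phatP phat (fun v => v.2.2.2 = s ∧ v.1 = x)
      = gW M.gamma s * M.am x := by
    intro s x
    rw [phatP_SX phat s x, k0, k0, k0, k0]
    linear_combination gW M.gamma s * M.Bm s x false * kA x false
      + gW M.gamma s * M.Bm s x true * kA x true + gW M.gamma s * M.am x * kB s x
  have m4 : ∀ s : Bool, phatP phat (fun v => v.2.2.2 = s) = gW M.gamma s := by
    intro s
    rw [phatP_S phat s, k0, k0, k0, k0, k0, k0, k0, k0]
    linear_combination gW M.gamma s * M.Bm s false false * kA false false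
      + gW M.gamma s * M.Bm s false true * kA false true
      + gW M.gamma s * M.am false * kB s false
      + gW M.gamma s * M.Bm s true false * kA true false
      + gW M.gamma s * M.Bm s true true * kA true true
      + gW M.gamma s * M.am true * kB s true
      + gW M.gamma s * ka
  have m5 : ∀ x z y : Bool, phatP phat (fun v => v.2.2.1 = y ∧ (v.1 = x ∧ v.2.1 = z))
      = M.Am x z y * (gW M.gamma false * M.Bm false x z + gW M.gamma true * M.Bm true x z) := by
    intro x z y
    rw [phatP_YXZ phat x z y, k0, k0]
    ring
  have m6 : ∀ s x z : Bool, phatP phat (fun v => v.2.1 = z ∧ (v.2.2.2 = s ∧ v.1 = x))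
      = gW M.gamma s * M.Bm s x z * M.am x := by
    intro s x z
    rw [phatP_ZSX phat s x z, k0, k0]
    linear_combination gW M.gamma s * M.Bm s x z * kA x z
  -- positivity
  have hax : ∀ x : Bool, 0 < M.am x := by
    intro x
    have hp := hposXZ x false
    rw [m2 x false] at hp
    rcases (hann x).lt_or_eq with h' | h'
    · exact h'
    · rw [← h', zero_mul] at hp; exact absurd hp (lt_irrefl 0)
  have hCs : ∀ x z : Bool,
      0 < gW M.gamma false * M.Bm false x z + gW M.gamma true * M.Bm true x z := by
    intro x z
    have hp := hposXZ x z
    rw [m2 x z] at hp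
    have hnn : 0 ≤ gW M.gamma false * M.Bm false x z + gW M.gamma true * M.Bm true x z := by
      have := mul_nonneg (hgnn false) (hBnn false x z)
      have := mul_nonneg (hgnn true) (hBnn true x z)
      linarith
    rcases hnn.lt_or_eq with h' | h'
    · exact h'
    · rw [← h', mul_zero] at hp; exact absurd hp (lt_irrefl 0)
  have hgs : ∀ s : Bool, 0 < gW M.gamma s := by
    intro s
    have hp := hposSX s false
    rw [m3 s false] at hp
    rcases (hgnn s).lt_or_eq with h' | h'
    · exact h'
    · rw [← h', zero_mul] at hp; exact absurd hp (lt_irrefl 0)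
  -- conclusions
  have e1 : ∀ x z y : Bool, M.Am x z y
      = phatCond phat (fun v => v.2.2.1 = y) (fun v => v.1 = x ∧ v.2.1 = z)
        * phatP phat (fun v => v.1 = x) := by
    intro x z y
    unfold phatCond
    rw [m5 x z y, m2 x z, m1 x]
    have h1 := (hax x).ne'
    have h2 := (hCs x z).ne'
    field_simp
  have e2 : ∀ s x z : Bool, M.Bm s x z
      = phatCond phat (fun v => v.2.1 = z) (fun v => v.2.2.2 = s ∧ v.1 = x) := by
    intro s x z
    unfold phatCond
    rw [m6 s x z, m3 s x]
    have h1 := (hax x).ne'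
    have h2 := (hgs s).ne'
    field_simp
  have e3 : M.gamma = phatP phat (fun v => v.2.2.2 = true) := by
    rw [m4 true]; simp [gW]
  refine ⟨e1, e2, e3, ?_⟩
  intro x z y s
  rw [← e1 x z y, ← e2 s x z, ← e3, k0 x z y s]

lemma objective_sum' (q1 : Fin 8 → ℝ) (q2 : Fin 16 → ℝ) (γ : ℝ) :
    (∑ j : Fin 8, ∑ k : Fin 16, ∑ s : Bool,
      (if fYc (fZc s true k) j = true ∧ fYc (fZc s false k) j = false
       then q1 j * q2 k * gW γ s else 0))
      = (q1 1 + q1 5) * h1 q2 γ + (q1 2 + q1 6) * h2 q2 γ := by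
  have sum_rot3 : ∀ {α β γ' : Type} [Fintype α] [Fintype β] [Fintype γ']
      (F : α → β → γ' → ℝ), (∑ a, ∑ b, ∑ c, F a b c) = ∑ c, ∑ b, ∑ a, F a b c := by
    intro α β γ' _ _ _ F
    calc (∑ a, ∑ b, ∑ c, F a b c)
        = ∑ a, ∑ c, ∑ b, F a b c := Finset.sum_congr rfl fun a _ => Finset.sum_comm
      _ = ∑ c, ∑ a, ∑ b, F a b c := Finset.sum_comm
      _ = ∑ c, ∑ b, ∑ a, F a b c :=
          Finset.sum_congr rfl fun c _ => Finset.sum_comm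
  rw [sum_rot3]
  exact objective_sum q1 q2 γ

namespace ReducedSCM

/-- canonical type of `u1` -/
noncomputable def t1M (M : ReducedSCM) (u : M.U1) : Fin 8 :=
  idx3 (M.fX u) (M.fY false u) (M.fY true u)

/-- canonical type of `u2` -/
noncomputable def t2M (M : ReducedSCM) (u : M.U2) : Fin 16 :=
  idx4 (M.fZ false false u) (M.fZ false true u) (M.fZ true false u) (M.fZ true true u)

lemma fXc_t1M (M : ReducedSCM) (u : M.U1) : fXc (M.t1M u) = M.fX u := fXc_idx3 _ _ _

lemma fYc_t1M (M : ReducedSCM) (z : Bool) (u : M.U1) : fYc z (M.t1M u) = M.fY z u := by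
  rw [t1M, fYc_idx3]; cases z <;> rfl

lemma fZc_t2M (M : ReducedSCM) (s x : Bool) (u : M.U2) : fZc s x (M.t2M u) = M.fZ s x u := by
  rw [t2M, fZc_idx4]; cases s <;> cases x <;> rfl

/-- pushforward weights on canonical types -/
noncomputable def q1M (M : ReducedSCM) (j : Fin 8) : ℝ :=
  ∑ u, if M.t1M u = j then M.p1 u else 0

noncomputable def q2M (M : ReducedSCM) (k : Fin 16) : ℝ :=
  ∑ u, if M.t2M u = k then M.p2 u else 0

lemma q1M_nonneg (M : ReducedSCM) (j : Fin 8) : 0 ≤ M.q1M j :=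
  Finset.sum_nonneg fun u _ => by
    by_cases hc : M.t1M u = j <;> simp [hc, M.p1_nonneg u]

lemma q2M_nonneg (M : ReducedSCM) (k : Fin 16) : 0 ≤ M.q2M k :=
  Finset.sum_nonneg fun u _ => by
    by_cases hc : M.t2M u = k <;> simp [hc, M.p2_nonneg u]

lemma q1M_sum (M : ReducedSCM) : ∑ j, M.q1M j = 1 := by
  unfold q1M
  rw [Finset.sum_comm, ← M.p1_sum]
  apply Finset.sum_congr rfl
  intro u _
  rw [Finset.sum_ite_eq Finset.univ (M.t1M u) (fun _ => M.p1 u)]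
  simp

lemma q2M_sum (M : ReducedSCM) : ∑ k, M.q2M k = 1 := by
  unfold q2M
  rw [Finset.sum_comm, ← M.p2_sum]
  apply Finset.sum_congr rfl
  intro u _
  rw [Finset.sum_ite_eq Finset.univ (M.t2M u) (fun _ => M.p2 u)]
  simp

lemma q1M_constraint (M : ReducedSCM) (x y z : Bool) :
    (∑ j : Fin 8, if fXc j = x ∧ fYc z j = y then M.q1M j else 0) = M.Am x z y := by
  unfold q1M
  rw [sum_fiber M.t1M M.p1 (fun j => fXc j = x ∧ fYc z j = y)]
  unfold Am
  apply Finset.sum_congr rfl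
  intro u _
  simp only [M.fXc_t1M, M.fYc_t1M]

lemma q2M_constraint (M : ReducedSCM) (s x z : Bool) :
    (∑ k : Fin 16, if fZc s x k = z then M.q2M k else 0) = M.Bm s x z := by
  unfold q2M
  rw [sum_fiber M.t2M M.p2 (fun k => fZc s x k = z)]
  unfold Bm
  apply Finset.sum_congr rfl
  intro u _
  simp only [M.fZc_t2M]

lemma PNS_eq (M : ReducedSCM) :
    M.PNS = (M.q1M 1 + M.q1M 5) * h1 M.q2M M.gamma
      + (M.q1M 2 + M.q1M 6) * h2 M.q2M M.gamma := by
  rw [← objective_sum' M.q1M M.q2M M.gamma]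
  have hw : ∀ v : Fin 8 × Fin 16 × Bool,
      (∑ u : M.U1 × M.U2 × Bool,
        if M.t1M u.1 = v.1 ∧ M.t2M u.2.1 = v.2.1 ∧ u.2.2 = v.2.2
        then M.p1 u.1 * M.p2 u.2.1 * (if u.2.2 = true then M.gamma else 1 - M.gamma) else 0)
      = M.q1M v.1 * M.q2M v.2.1 * gW M.gamma v.2.2 := by
    intro v
    rw [sum_ite_prod3 (fun a => M.t1M a = v.1) (fun b => M.t2M b = v.2.1)
      (fun c => c = v.2.2) M.p1 M.p2 (fun c => if c = true then M.gamma else 1 - M.gamma)]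
    rw [Finset.sum_ite_eq' Finset.univ v.2.2 (fun c => if c = true then M.gamma else 1 - M.gamma)]
    simp [gW, q1M, q2M]
  calc M.PNS
      = ∑ u : M.U1 × M.U2 × Bool,
          (if fYc (fZc u.2.2 true (M.t2M u.2.1)) (M.t1M u.1) = true
              ∧ fYc (fZc u.2.2 false (M.t2M u.2.1)) (M.t1M u.1) = false
           then M.p1 u.1 * M.p2 u.2.1 * (if u.2.2 = true then M.gamma else 1 - M.gamma)
           else 0) := by
        simp only [PNS, P, w, Yx, S]
        simp only [M.fYc_t1M, M.fZc_t2M]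
        congr 1
        funext u
        by_cases hc : M.fY (M.fZ u.2.2 true u.2.1) u.1 = true ∧ M.fY (M.fZ u.2.2 false u.2.1) u.1 = false
        · exact (if_pos hc).trans (if_pos hc).symm
        · exact (if_neg hc).trans (if_neg hc).symm
    _ = ∑ v : Fin 8 × Fin 16 × Bool,
          (if fYc (fZc v.2.2 true v.2.1) v.1 = true ∧ fYc (fZc v.2.2 false v.2.1) v.1 = false
           then (∑ u : M.U1 × M.U2 × Bool,
              if M.t1M u.1 = v.1 ∧ M.t2M u.2.1 = v.2.1 ∧ u.2.2 = v.2.2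
              then M.p1 u.1 * M.p2 u.2.1 * (if u.2.2 = true then M.gamma else 1 - M.gamma) else 0)
           else 0) := by
        have hfib := sum_fiber (β := Fin 8 × Fin 16 × Bool)
          (fun u : M.U1 × M.U2 × Bool => ((M.t1M u.1, M.t2M u.2.1, u.2.2) : Fin 8 × Fin 16 × Bool))
          (fun u => M.p1 u.1 * M.p2 u.2.1 * (if u.2.2 = true then M.gamma else 1 - M.gamma))
          (fun v => fYc (fZc v.2.2 true v.2.1) v.1 = true
            ∧ fYc (fZc v.2.2 false v.2.1) v.1 = false)
        rw [← hfib]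
        apply Finset.sum_congr rfl
        intro v _
        congr 1
        apply Finset.sum_congr rfl
        intro u _
        congr 1
        simp [Prod.ext_iff, and_assoc]
    _ = ∑ v : Fin 8 × Fin 16 × Bool,
          (if fYc (fZc v.2.2 true v.2.1) v.1 = true ∧ fYc (fZc v.2.2 false v.2.1) v.1 = false
           then M.q1M v.1 * M.q2M v.2.1 * gW M.gamma v.2.2 else 0) := by
        apply Finset.sum_congr rfl
        intro v _
        rw [hw v]
    _ = ∑ j : Fin 8, ∑ k : Fin 16, ∑ s : Bool,
          (if fYc (fZc s true k) j = true ∧ fYc (fZc s false k) j = false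
           then M.q1M j * M.q2M k * gW M.gamma s else 0) := by
        rw [Fintype.sum_prod_type]
        apply Finset.sum_congr rfl
        intro j _
        rw [Fintype.sum_prod_type]

end ReducedSCM

lemma idx3_inv : ∀ j : Fin 8, idx3 (fXc j) (fYc false j) (fYc true j) = j := by decide

lemma idx4_inv : ∀ k : Fin 16,
    idx4 (fZc false false k) (fZc false true k) (fZc true false k) (fZc true true k) = k := by
  decide

/-- The canonical SCM built from a feasible point. -/
noncomputable def canonM (q1 : Fin 8 → ℝ) (q2 : Fin 16 → ℝ) (γ : ℝ)
    (ha1 : ∀ j, 0 ≤ q1 j) (ha2 : ∑ j, q1 j = 1) (ha3 : ∀ k, 0 ≤ q2 k) (ha4 : ∑ k, q2 k = 1)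
    (ha5 : 0 ≤ γ) (ha6 : γ ≤ 1) : ReducedSCM where
  U1 := Fin 8
  U2 := Fin 16
  p1 := q1
  p2 := q2
  gamma := γ
  p1_nonneg := ha1
  p2_nonneg := ha3
  p1_sum := ha2
  p2_sum := ha4
  gamma_nonneg := ha5
  gamma_le_one := ha6
  fX := fXc
  fZ := fZc
  fY := fYc

section canonM

variable (q1 : Fin 8 → ℝ) (q2 : Fin 16 → ℝ) (γ : ℝ)
    (ha1 : ∀ j, 0 ≤ q1 j) (ha2 : ∑ j, q1 j = 1) (ha3 : ∀ k, 0 ≤ q2 k) (ha4 : ∑ k, q2 k = 1)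
    (ha5 : 0 ≤ γ) (ha6 : γ ≤ 1)

lemma canonM_Am (x z y : Bool) :
    (canonM q1 q2 γ ha1 ha2 ha3 ha4 ha5 ha6).Am x z y
      = ∑ j : Fin 8, if fXc j = x ∧ fYc z j = y then q1 j else 0 := rfl

lemma canonM_Bm (s x z : Bool) :
    (canonM q1 q2 γ ha1 ha2 ha3 ha4 ha5 ha6).Bm s x z
      = ∑ k : Fin 16, if fZc s x k = z then q2 k else 0 := rfl

lemma canonM_q1M : (canonM q1 q2 γ ha1 ha2 ha3 ha4 ha5 ha6).q1M = q1 := by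
  funext j
  unfold ReducedSCM.q1M
  have ht : ∀ u : Fin 8, (canonM q1 q2 γ ha1 ha2 ha3 ha4 ha5 ha6).t1M u = u := fun u => idx3_inv u
  exact (Finset.sum_eq_single j (fun b _ hb => if_neg (by rw [ht b]; exact hb)) (fun h => absurd (Finset.mem_univ j) h)).trans (if_pos (ht j))

lemma canonM_q2M : (canonM q1 q2 γ ha1 ha2 ha3 ha4 ha5 ha6).q2M = q2 := by
  funext k
  unfold ReducedSCM.q2M
  have ht : ∀ u : Fin 16, (canonM q1 q2 γ ha1 ha2 ha3 ha4 ha5 ha6).t2M u = u := fun u => idx4_inv u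
  exact (Finset.sum_eq_single k (fun b _ hb => if_neg (by rw [ht b]; exact hb)) (fun h => absurd (Finset.mem_univ k) h)).trans (if_pos (ht k))

lemma canonM_PNS :
    (canonM q1 q2 γ ha1 ha2 ha3 ha4 ha5 ha6).PNS
      = (q1 1 + q1 5) * h1 q2 γ + (q1 2 + q1 6) * h2 q2 γ := by
  rw [ReducedSCM.PNS_eq, canonM_q1M, canonM_q2M]
  rfl

end canonM

end Aux

/-- If `p̂` is the joint distribution of `(X, Z, Y, S)` of some
reduced SCM, with `p̂(X = x, Z = z) > 0` and `p̂(S = s, X = x) > 0` for all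
`x, z, s`, and `γ = p̂(S = 1)`, then the set of PNS values attained by reduced
SCMs inducing `p̂` is exactly the set of values of the bilinear objective
`(q1_1 + q1_5)·h1 + (q1_2 + q1_6)·h2` over the feasible region. -/
theorem PNS_values_eq_bilinear_program
    (phat : Bool × Bool × Bool × Bool → ℝ)
    (hind : ∃ M0 : ReducedSCM, M0.induces phat)
    (hposXZ : ∀ x z : Bool, 0 < phatP phat (fun v => v.1 = x ∧ v.2.1 = z))
    (hposSX : ∀ s x : Bool, 0 < phatP phat (fun v => v.2.2.2 = s ∧ v.1 = x)) :
    {r : ℝ | ∃ M : ReducedSCM, M.induces phat ∧ M.PNS = r}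
      = {r : ℝ | ∃ (q1 : Fin 8 → ℝ) (q2 : Fin 16 → ℝ), feasible phat q1 q2 ∧
          r = (q1 1 + q1 5) * h1 q2 (phatP phat (fun v => v.2.2.2 = true))
              + (q1 2 + q1 6) * h2 q2 (phatP phat (fun v => v.2.2.2 = true))} := by
  obtain ⟨M0, hM0⟩ := hind
  obtain ⟨e1₀, e2₀, e3₀, mf⟩ := key phat M0 hM0 hposXZ hposSX
  ext r
  simp only [Set.mem_setOf_eq]
  constructor
  · rintro ⟨M, hM, rfl⟩
    obtain ⟨e1, e2, e3, _⟩ := key phat M hM hposXZ hposSX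
    refine ⟨M.q1M, M.q2M, ⟨M.q1M_nonneg, M.q1M_sum, M.q2M_nonneg, M.q2M_sum, ?_, ?_⟩, ?_⟩
    · intro x y z
      rw [M.q1M_constraint x y z, e1 x z y]
    · intro s x z
      rw [M.q2M_constraint s x z, e2 s x z]
    · rw [M.PNS_eq, e3]
  · rintro ⟨q1, q2, ⟨hq1nn, hq1s, hq2nn, hq2s, hc1, hc2⟩, rfl⟩
    have hg0 : 0 ≤ phatP phat (fun v => v.2.2.2 = true) := e3₀ ▸ M0.gamma_nonneg
    have hg1 : phatP phat (fun v => v.2.2.2 = true) ≤ 1 := e3₀ ▸ M0.gamma_le_one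
    refine ⟨canonM q1 q2 (phatP phat (fun v => v.2.2.2 = true))
      hq1nn hq1s hq2nn hq2s hg0 hg1, ?_, ?_⟩
    · intro x z y s
      rw [ReducedSCM.P_factor, canonM_Am, canonM_Bm, hc1 x y z, hc2 s x z]
      exact (mf x z y s).symm
    · exact canonM_PNS q1 q2 _ hq1nn hq1s hq2nn hq2s hg0 hg1
end

section
/- Let p̂ : {0,1}^4 → ℝ be the joint distribution of (X, Z, Y, S) induced by some reduced SCM, and suppose p̂(X = x, Z = z) > 0 and p̂(S = s, X = x) > 0 for all x, z, s ∈ {0,1}, and p̂(X = 1, Y = 1) > 0. Let γ = p̂(S = 1). Then the set of values of PN = P(Y_{X=0} = 0, X = 1, Y = 1)/P(X = 1, Y = 1) attained by reduced SCMs whose induced joint distribution of (X, Z, Y, S) equals p̂ is exactly the set of values of (q1_5·h1 + q1_6·h2)/p̂(X = 1, Y = 1) as (q1, q2) ranges over the feasible region: q1 ∈ ℝ^8 and q2 ∈ ℝ^16 nonnegative, each summing to 1, satisfying for all x, y, z ∈ {0,1} the constraint Σ_{j with fX(j) = x and fY(z, j) = y} q1_j = p̂(Y = y | X = x, Z = z)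 · p̂(X = x), and for all s, x, z ∈ {0,1} the constraint Σ_{k with fZ(s, x, k) = z} q2_k = p̂(Z = z | S = s, X = x), where h1 = (1−γ)(q2_4 + q2_5 + q2_6 + q2_7) + γ(q2_1 + q2_5 + q2_9 + q2_13) and h2 = (1−γ)(q2_8 + q2_9 + q2_10 + q2_11) + γ(q2_2 + q2_6 + q2_10 + q2_14). -/
open Finset

attribute [local instance] Classical.propDecidable

namespace PNaux

noncomputable def A (M : ReducedSCM) (x z y : Bool) : ℝ :=
  ∑ u, if M.fX u = x ∧ M.fY z u = y then M.p1 u else 0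

noncomputable def B (M : ReducedSCM) (s x z : Bool) : ℝ :=
  ∑ u, if M.fZ s x u = z then M.p2 u else 0

noncomputable def gs (M : ReducedSCM) (s : Bool) : ℝ :=
  if s then M.gamma else 1 - M.gamma

lemma factor (M : ReducedSCM) (x z y s : Bool) :
    M.P (fun u => M.X u = x ∧ M.Z u = z ∧ M.Y u = y ∧ M.S u = s)
      = gs M s * A M x z y * B M s x z := by
  unfold ReducedSCM.P ReducedSCM.w A B gs
  rw [Fintype.sum_prod_type]
  simp_rw [Fintype.sum_prod_type]
  have key : ∀ (u1 : M.U1) (u2 : M.U2),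
      (∑ s' : Bool, if M.X (u1, u2, s') = x ∧ M.Z (u1, u2, s') = z ∧ M.Y (u1, u2, s') = y
            ∧ M.S (u1, u2, s') = s
          then M.p1 u1 * M.p2 u2 * (if s' = true then M.gamma else 1 - M.gamma) else 0)
        = (if M.fX u1 = x ∧ M.fY z u1 = y then M.p1 u1 else 0)
          * (if M.fZ s x u2 = z then M.p2 u2 else 0)
          * (if s = true then M.gamma else 1 - M.gamma) := by
    intro u1 u2
    simp only [ReducedSCM.X, ReducedSCM.Z, ReducedSCM.Y, ReducedSCM.S, Fintype.sum_bool]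
    by_cases hx : M.fX u1 = x
    · simp only [hx]
      cases s <;> by_cases hz : M.fZ false x u2 = z <;>
        by_cases hz' : M.fZ true x u2 = z <;>
        by_cases hy : M.fY z u1 = y <;>
        simp_all
    · simp [hx]
  simp_rw [key, ← Finset.sum_mul, ← Finset.mul_sum, ← Finset.sum_mul]
  ring


noncomputable def Ee (M : ReducedSCM) (z1 z0 : Bool) : ℝ :=
  ∑ u, if M.fX u = true ∧ M.fY z1 u = true ∧ M.fY z0 u = false then M.p1 u else 0

noncomputable def C (M : ReducedSCM) (s z1 z0 : Bool) : ℝ :=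
  ∑ u, if M.fZ s true u = z1 ∧ M.fZ s false u = z0 then M.p2 u else 0

lemma factorNum (M : ReducedSCM) :
    M.P (fun u => M.Yx false u = false ∧ M.X u = true ∧ M.Y u = true)
      = Ee M true false * (gs M false * C M false true false + gs M true * C M true true false)
      + Ee M false true * (gs M false * C M false false true + gs M true * C M true false true) := by
  unfold ReducedSCM.P ReducedSCM.w Ee C gs
  rw [Fintype.sum_prod_type]
  simp_rw [Fintype.sum_prod_type]
  have key : ∀ (u1 : M.U1) (u2 : M.U2),
      (∑ s' : Bool, if M.Yx false (u1, u2, s') = false ∧ M.X (u1, u2, s') = true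
            ∧ M.Y (u1, u2, s') = true
          then M.p1 u1 * M.p2 u2 * (if s' = true then M.gamma else 1 - M.gamma) else 0)
        = (if M.fX u1 = true ∧ M.fY true u1 = true ∧ M.fY false u1 = false then M.p1 u1 else 0)
            * ((1 - M.gamma) * (if M.fZ false true u2 = true ∧ M.fZ false false u2 = false then M.p2 u2 else 0))
          + (if M.fX u1 = true ∧ M.fY true u1 = true ∧ M.fY false u1 = false then M.p1 u1 else 0)
            * (M.gamma * (if M.fZ true true u2 = true ∧ M.fZ true false u2 = false then M.p2 u2 else 0))
          + (if M.fX u1 = true ∧ M.fY false u1 = true ∧ M.fY true u1 = false then M.p1 u1 else 0)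
            * ((1 - M.gamma) * (if M.fZ false true u2 = false ∧ M.fZ false false u2 = true then M.p2 u2 else 0))
          + (if M.fX u1 = true ∧ M.fY false u1 = true ∧ M.fY true u1 = false then M.p1 u1 else 0)
            * (M.gamma * (if M.fZ true true u2 = false ∧ M.fZ true false u2 = true then M.p2 u2 else 0)) := by
    intro u1 u2
    simp only [ReducedSCM.Yx, ReducedSCM.X, ReducedSCM.Y, ReducedSCM.Z, ReducedSCM.S,
      Fintype.sum_bool]
    by_cases hx : M.fX u1 = true
    · simp only [hx]
      cases hb0 : M.fZ false true u2 <;> cases hb1 : M.fZ false false u2 <;>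
        cases hb2 : M.fZ true true u2 <;> cases hb3 : M.fZ true false u2 <;>
        cases hyt : M.fY true u1 <;> cases hyf : M.fY false u1 <;>
        simp_all <;> ring
    · simp [hx]
  simp_rw [key, Finset.sum_add_distrib, ← Finset.mul_sum, ← Finset.sum_mul]
  norm_num
  ring

noncomputable def A' (M : ReducedSCM) (x : Bool) : ℝ :=
  ∑ u, if M.fX u = x then M.p1 u else 0

noncomputable def K (M : ReducedSCM) (x z : Bool) : ℝ :=
  gs M false * B M false x z + gs M true * B M true x z

lemma A_add (M : ReducedSCM) (x z : Bool) :
    A M x z true + A M x z false = A' M x := by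
  unfold A A'
  rw [← Finset.sum_add_distrib]
  refine Finset.sum_congr rfl fun u _ => ?_
  by_cases hx : M.fX u = x <;> cases hy : M.fY z u <;> simp [hx, hy]

lemma B_add (M : ReducedSCM) (s x : Bool) :
    B M s x true + B M s x false = 1 := by
  unfold B
  rw [← Finset.sum_add_distrib, ← M.p2_sum]
  refine Finset.sum_congr rfl fun u _ => ?_
  cases hz : M.fZ s x u <;> simp [hz]

lemma A'_add (M : ReducedSCM) : A' M true + A' M false = 1 := by
  unfold A'
  rw [← Finset.sum_add_distrib, ← M.p1_sum]
  refine Finset.sum_congr rfl fun u _ => ?_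
  cases hx : M.fX u <;> simp [hx]

lemma gs_add (M : ReducedSCM) : gs M true + gs M false = 1 := by
  unfold gs; simp

lemma Ksum (M : ReducedSCM) (x : Bool) : K M x true + K M x false = 1 := by
  unfold K
  linear_combination gs M false * B_add M false x + gs M true * B_add M true x + gs_add M

lemma A_nonneg (M : ReducedSCM) (x z y : Bool) : 0 ≤ A M x z y :=
  Finset.sum_nonneg fun u _ => by by_cases h : M.fX u = x ∧ M.fY z u = y <;>
    simp [h, M.p1_nonneg u]

lemma A'_nonneg (M : ReducedSCM) (x : Bool) : 0 ≤ A' M x :=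
  Finset.sum_nonneg fun u _ => by by_cases h : M.fX u = x <;> simp [h, M.p1_nonneg u]

lemma B_nonneg (M : ReducedSCM) (s x z : Bool) : 0 ≤ B M s x z :=
  Finset.sum_nonneg fun u _ => by by_cases h : M.fZ s x u = z <;> simp [h, M.p2_nonneg u]

lemma gs_true (M : ReducedSCM) : gs M true = M.gamma := by simp [gs]

lemma gs_false (M : ReducedSCM) : gs M false = 1 - M.gamma := by simp [gs]

lemma gs_nonneg (M : ReducedSCM) (s : Bool) : 0 ≤ gs M s := by
  unfold gs; cases s <;> simp [M.gamma_nonneg, M.gamma_le_one]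

lemma K_nonneg (M : ReducedSCM) (x z : Bool) : 0 ≤ K M x z := by
  unfold K
  have := gs_nonneg M true; have := gs_nonneg M false
  have := B_nonneg M true x z; have := B_nonneg M false x z
  positivity

lemma pos_pos {a b : ℝ} (ha : 0 ≤ a) (hb : 0 ≤ b) (hab : 0 < a * b) :
    0 < a ∧ 0 < b := by
  constructor
  · rcases ha.lt_or_eq with h | h
    · exact h
    · exfalso; rw [← h] at hab; simp at hab
  · rcases hb.lt_or_eq with h | h
    · exact h
    · exfalso; rw [← h] at hab; simp at hab

lemma phatP_expand (phat : Bool × Bool × Bool × Bool → ℝ)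
    (E : Bool × Bool × Bool × Bool → Prop) :
    phatP phat E = ∑ x : Bool, ∑ z : Bool, ∑ y : Bool, ∑ s : Bool,
      if E (x, z, y, s) then phat (x, z, y, s) else 0 := by
  unfold phatP
  rw [Fintype.sum_prod_type]
  simp_rw [Fintype.sum_prod_type]

lemma phat_val {M : ReducedSCM} {phat : Bool × Bool × Bool × Bool → ℝ}
    (hM : M.induces phat) (x z y s : Bool) :
    phat (x, z, y, s) = gs M s * A M x z y * B M s x z := by
  rw [← hM x z y s, factor]

section Ident
variable {M : ReducedSCM} {phat : Bool × Bool × Bool × Bool → ℝ}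
  (hM : M.induces phat)
include hM

lemma I1 (x z y : Bool) :
    phatP phat (fun v => v.2.2.1 = y ∧ (v.1 = x ∧ v.2.1 = z)) = A M x z y * K M x z := by
  rw [phatP_expand]
  simp_rw [phat_val hM, Fintype.sum_bool]
  cases x <;> cases z <;> cases y <;> simp [K] <;> ring

lemma I2 (x z : Bool) :
    phatP phat (fun v => v.1 = x ∧ v.2.1 = z) = A' M x * K M x z := by
  have key : ∀ x z : Bool,
      gs M true * A M x z true * B M true x z + gs M false * A M x z true * B M false x z
      + gs M true * A M x z false * B M true x z + gs M false * A M x z false * B M false x z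
      = A' M x * K M x z := by
    intro x z; unfold K
    linear_combination (gs M true * B M true x z + gs M false * B M false x z) * A_add M x z
  rw [phatP_expand]
  simp_rw [phat_val hM, Fintype.sum_bool]
  cases x <;> cases z <;> simp <;>
    [linear_combination key false false; linear_combination key false true;
     linear_combination key true false; linear_combination key true true]

lemma I3 (x : Bool) : phatP phat (fun v => v.1 = x) = A' M x := by
  have key : ∀ x : Bool,
      A' M x * K M x true + A' M x * K M x false = A' M x := by
    intro x; linear_combination A' M x * Ksum M x
  have key2 : ∀ x z : Bool,
      gs M true * A M x z true * B M true x z + gs M false * A M x z true * B M false x z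
      + gs M true * A M x z false * B M true x z + gs M false * A M x z false * B M false x z
      = A' M x * K M x z := by
    intro x z; unfold K
    linear_combination (gs M true * B M true x z + gs M false * B M false x z) * A_add M x z
  rw [phatP_expand]
  simp_rw [phat_val hM, Fintype.sum_bool]
  cases x <;> simp <;>
    [linear_combination key false + key2 false true + key2 false false;
     linear_combination key true + key2 true true + key2 true false]

lemma I4 (z s x : Bool) :
    phatP phat (fun v => v.2.1 = z ∧ (v.2.2.2 = s ∧ v.1 = x))
      = gs M s * A' M x * B M s x z := by
  have key : ∀ z s x : Bool,
      gs M s * A M x z true * B M s x z + gs M s * A M x z false * B M s x z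
      = gs M s * A' M x * B M s x z := by
    intro z s x; linear_combination (gs M s * B M s x z) * A_add M x z
  rw [phatP_expand]
  simp_rw [phat_val hM, Fintype.sum_bool]
  cases x <;> cases z <;> cases s <;> simp <;>
    [linear_combination key false false false; linear_combination key false true false;
     linear_combination key true false false; linear_combination key true true false;
     linear_combination key false false true; linear_combination key false true true;
     linear_combination key true false true; linear_combination key true true true]

lemma I5 (s x : Bool) :
    phatP phat (fun v => v.2.2.2 = s ∧ v.1 = x) = gs M s * A' M x := by
  have key : ∀ s x : Bool,
      gs M s * A M x true true * B M s x true + gs M s * A M x true false * B M s x true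
      + gs M s * A M x false true * B M s x false + gs M s * A M x false false * B M s x false
      = gs M s * A' M x := by
    intro s x
    linear_combination (gs M s * B M s x true) * A_add M x true
      + (gs M s * B M s x false) * A_add M x false + (gs M s * A' M x) * B_add M s x
  rw [phatP_expand]
  simp_rw [phat_val hM, Fintype.sum_bool]
  cases x <;> cases s <;> simp <;>
    [linear_combination key false false; linear_combination key true false;
     linear_combination key false true; linear_combination key true true]

lemma I6 : phatP phat (fun v => v.2.2.2 = true) = M.gamma := by
  have key : gs M true * A M true true true * B M true true true
      + gs M true * A M true true false * B M true true true
      + gs M true * A M true false true * B M true true false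
      + gs M true * A M true false false * B M true true false
      + gs M true * A M false true true * B M true false true
      + gs M true * A M false true false * B M true false true
      + gs M true * A M false false true * B M true false false
      + gs M true * A M false false false * B M true false false
      = M.gamma := by
    have hg : gs M true = M.gamma := by unfold gs; simp
    linear_combination (gs M true * B M true true true) * A_add M true true
      + (gs M true * B M true true false) * A_add M true false
      + (gs M true * B M true false true) * A_add M false true
      + (gs M true * B M true false false) * A_add M false false
      + (gs M true * A' M true) * B_add M true true
      + (gs M true * A' M false) * B_add M true false
      + gs M true * A'_add M + hg
  rw [phatP_expand]
  simp_rw [phat_val hM, Fintype.sum_bool]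
  simp
  linear_combination key

end Ident

lemma sum_swap3 {α : Type} [Fintype α] (F : Bool → Bool → α → ℝ) :
    (∑ z : Bool, ∑ s : Bool, ∑ u, F z s u) = ∑ u, ∑ z : Bool, ∑ s : Bool, F z s u :=
  (Finset.sum_congr rfl fun _ _ => Finset.sum_comm).trans Finset.sum_comm

lemma P_margZS (M : ReducedSCM) :
    M.P (fun u => M.X u = true ∧ M.Y u = true)
      = ∑ z : Bool, ∑ s : Bool,
          M.P (fun u => M.X u = true ∧ M.Z u = z ∧ M.Y u = true ∧ M.S u = s) := by
  simp only [ReducedSCM.P]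
  rw [sum_swap3]
  refine Finset.sum_congr rfl fun u _ => ?_
  simp_rw [Fintype.sum_bool]
  by_cases hx : M.X u = true <;> by_cases hy : M.Y u = true <;>
    by_cases hz : M.Z u = true <;> by_cases hs : M.S u = true <;> simp_all

lemma I7 {M : ReducedSCM} {phat : Bool × Bool × Bool × Bool → ℝ}
    (hM : M.induces phat) :
    M.P (fun u => M.X u = true ∧ M.Y u = true)
      = phatP phat (fun v => v.1 = true ∧ v.2.2.1 = true) := by
  rw [P_margZS]
  rw [phatP_expand]
  simp only [Fintype.sum_bool]
  rw [hM true true true true, hM true true true false, hM true false true true,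
    hM true false true false]
  simp

def t1 (M : ReducedSCM) (u : M.U1) : Fin 8 :=
  match M.fX u, M.fY false u, M.fY true u with
  | false, false, false => 0
  | false, false, true => 1
  | false, true, false => 2
  | false, true, true => 3
  | true, false, false => 4
  | true, false, true => 5
  | true, true, false => 6
  | true, true, true => 7

def t2 (M : ReducedSCM) (u : M.U2) : Fin 16 :=
  match M.fZ false false u, M.fZ false true u, M.fZ true false u, M.fZ true true u with
  | false, false, false, false => 0
  | false, false, false, true => 1
  | false, false, true, false => 2
  | false, false, true, true => 3
  | false, true, false, false => 4
  | false, true, false, true => 5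
  | false, true, true, false => 6
  | false, true, true, true => 7
  | true, false, false, false => 8
  | true, false, false, true => 9
  | true, false, true, false => 10
  | true, false, true, true => 11
  | true, true, false, false => 12
  | true, true, false, true => 13
  | true, true, true, false => 14
  | true, true, true, true => 15

lemma t1_X (M : ReducedSCM) (u : M.U1) : fXc (t1 M u) = M.fX u := by
  unfold t1
  cases hx : M.fX u <;> cases hf : M.fY false u <;> cases ht : M.fY true u <;> rfl

lemma t1_Y (M : ReducedSCM) (z : Bool) (u : M.U1) : fYc z (t1 M u) = M.fY z u := by
  unfold t1
  cases z <;> cases hx : M.fX u <;> cases hf : M.fY false u <;> cases ht : M.fY true u <;>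
    simp_all <;> rfl

lemma t2_Z (M : ReducedSCM) (s x : Bool) (u : M.U2) : fZc s x (t2 M u) = M.fZ s x u := by
  unfold t2
  cases s <;> cases x <;> cases h0 : M.fZ false false u <;> cases h1 : M.fZ false true u <;>
    cases h2 : M.fZ true false u <;> cases h3 : M.fZ true true u <;> simp_all <;> rfl

noncomputable def qq1 (M : ReducedSCM) (j : Fin 8) : ℝ :=
  ∑ u, if t1 M u = j then M.p1 u else 0

noncomputable def qq2 (M : ReducedSCM) (k : Fin 16) : ℝ :=
  ∑ u, if t2 M u = k then M.p2 u else 0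

lemma groupby8 (M : ReducedSCM) (Q : Fin 8 → Prop) :
    (∑ j : Fin 8, if Q j then qq1 M j else 0)
      = ∑ u, if Q (t1 M u) then M.p1 u else 0 := by
  unfold qq1
  have pt : ∀ j, (if Q j then (∑ u, if t1 M u = j then M.p1 u else 0) else 0)
      = ∑ u, if t1 M u = j then (if Q j then M.p1 u else 0) else 0 := by
    intro j
    by_cases h : Q j
    · rw [if_pos h]
      exact Finset.sum_congr rfl fun u _ => by rw [if_pos h]
    · rw [if_neg h]
      exact (Finset.sum_eq_zero fun u _ => by rw [if_neg h, ite_self]).symm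
  simp_rw [pt]
  rw [Finset.sum_comm]
  refine Finset.sum_congr rfl fun u _ => ?_
  rw [Fintype.sum_ite_eq]

lemma groupby16 (M : ReducedSCM) (Q : Fin 16 → Prop) :
    (∑ k : Fin 16, if Q k then qq2 M k else 0)
      = ∑ u, if Q (t2 M u) then M.p2 u else 0 := by
  unfold qq2
  have pt : ∀ k, (if Q k then (∑ u, if t2 M u = k then M.p2 u else 0) else 0)
      = ∑ u, if t2 M u = k then (if Q k then M.p2 u else 0) else 0 := by
    intro k
    by_cases h : Q k
    · rw [if_pos h]
      exact Finset.sum_congr rfl fun u _ => by rw [if_pos h]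
    · rw [if_neg h]
      exact (Finset.sum_eq_zero fun u _ => by rw [if_neg h, ite_self]).symm
  simp_rw [pt]
  rw [Finset.sum_comm]
  refine Finset.sum_congr rfl fun u _ => ?_
  rw [Fintype.sum_ite_eq]

lemma qq1_nonneg (M : ReducedSCM) (j : Fin 8) : 0 ≤ qq1 M j :=
  Finset.sum_nonneg fun u _ => by by_cases h : t1 M u = j <;> simp [h, M.p1_nonneg u]

lemma qq2_nonneg (M : ReducedSCM) (k : Fin 16) : 0 ≤ qq2 M k :=
  Finset.sum_nonneg fun u _ => by by_cases h : t2 M u = k <;> simp [h, M.p2_nonneg u]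

lemma qq1_sum (M : ReducedSCM) : ∑ j, qq1 M j = 1 := by
  have := groupby8 M (fun _ => True)
  simpa [M.p1_sum] using this

lemma qq2_sum (M : ReducedSCM) : ∑ k, qq2 M k = 1 := by
  have := groupby16 M (fun _ => True)
  simpa [M.p2_sum] using this

lemma sumA (M : ReducedSCM) (x z y : Bool) :
    (∑ j : Fin 8, if fXc j = x ∧ fYc z j = y then qq1 M j else 0) = A M x z y := by
  unfold qq1
  have pt : ∀ j, (if fXc j = x ∧ fYc z j = y then (∑ u, if t1 M u = j then M.p1 u else 0) else 0)
      = ∑ u, if t1 M u = j then (if fXc j = x ∧ fYc z j = y then M.p1 u else 0) else 0 := by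
    intro j
    by_cases h : fXc j = x ∧ fYc z j = y
    · rw [if_pos h]
      exact Finset.sum_congr rfl fun u _ => by rw [if_pos h]
    · rw [if_neg h]
      exact (Finset.sum_eq_zero fun u _ => by rw [if_neg h, ite_self]).symm
  simp_rw [pt]
  rw [Finset.sum_comm]
  unfold A
  refine Finset.sum_congr rfl fun u _ => ?_
  rw [Fintype.sum_ite_eq]
  by_cases h1 : M.fX u = x <;> by_cases h2 : M.fY z u = y <;> simp [t1_X, t1_Y, h1, h2]

lemma sumEe (M : ReducedSCM) (z1 z0 : Bool) :
    (∑ j : Fin 8, if fXc j = true ∧ fYc z1 j = true ∧ fYc z0 j = false then qq1 M j else 0)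
      = Ee M z1 z0 := by
  unfold qq1
  have pt : ∀ j, (if fXc j = true ∧ fYc z1 j = true ∧ fYc z0 j = false then (∑ u, if t1 M u = j then M.p1 u else 0) else 0)
      = ∑ u, if t1 M u = j then (if fXc j = true ∧ fYc z1 j = true ∧ fYc z0 j = false then M.p1 u else 0) else 0 := by
    intro j
    by_cases h : fXc j = true ∧ fYc z1 j = true ∧ fYc z0 j = false
    · rw [if_pos h]
      exact Finset.sum_congr rfl fun u _ => by rw [if_pos h]
    · rw [if_neg h]
      exact (Finset.sum_eq_zero fun u _ => by rw [if_neg h, ite_self]).symm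
  simp_rw [pt]
  rw [Finset.sum_comm]
  unfold Ee
  refine Finset.sum_congr rfl fun u _ => ?_
  rw [Fintype.sum_ite_eq]
  by_cases h1 : M.fX u = true <;> by_cases h2 : M.fY z1 u = true <;> by_cases h3 : M.fY z0 u = false <;> simp [t1_X, t1_Y, h1, h2, h3]

lemma sumB (M : ReducedSCM) (s x z : Bool) :
    (∑ k : Fin 16, if fZc s x k = z then qq2 M k else 0) = B M s x z := by
  unfold qq2
  have pt : ∀ j, (if fZc s x j = z then (∑ u, if t2 M u = j then M.p2 u else 0) else 0)
      = ∑ u, if t2 M u = j then (if fZc s x j = z then M.p2 u else 0) else 0 := by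
    intro j
    by_cases h : fZc s x j = z
    · rw [if_pos h]
      exact Finset.sum_congr rfl fun u _ => by rw [if_pos h]
    · rw [if_neg h]
      exact (Finset.sum_eq_zero fun u _ => by rw [if_neg h, ite_self]).symm
  simp_rw [pt]
  rw [Finset.sum_comm]
  unfold B
  refine Finset.sum_congr rfl fun u _ => ?_
  rw [Fintype.sum_ite_eq]
  by_cases h1 : M.fZ s x u = z <;> simp [t2_Z, h1]

lemma sumC (M : ReducedSCM) (s z1 z0 : Bool) :
    (∑ k : Fin 16, if fZc s true k = z1 ∧ fZc s false k = z0 then qq2 M k else 0)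
      = C M s z1 z0 := by
  unfold qq2
  have pt : ∀ j, (if fZc s true j = z1 ∧ fZc s false j = z0 then (∑ u, if t2 M u = j then M.p2 u else 0) else 0)
      = ∑ u, if t2 M u = j then (if fZc s true j = z1 ∧ fZc s false j = z0 then M.p2 u else 0) else 0 := by
    intro j
    by_cases h : fZc s true j = z1 ∧ fZc s false j = z0
    · rw [if_pos h]
      exact Finset.sum_congr rfl fun u _ => by rw [if_pos h]
    · rw [if_neg h]
      exact (Finset.sum_eq_zero fun u _ => by rw [if_neg h, ite_self]).symm
  simp_rw [pt]
  rw [Finset.sum_comm]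
  unfold C
  refine Finset.sum_congr rfl fun u _ => ?_
  rw [Fintype.sum_ite_eq]
  by_cases h1 : M.fZ s true u = z1 <;> by_cases h2 : M.fZ s false u = z0 <;> simp [t2_Z, h1, h2]

lemma ev5 (q : Fin 8 → ℝ) :
    (∑ j : Fin 8, if fXc j = true ∧ fYc true j = true ∧ fYc false j = false then q j else 0)
      = q 5 := by
  simp (config := { decide := true }) [Fin.sum_univ_eight, fXc, fYc]

lemma ev6 (q : Fin 8 → ℝ) :
    (∑ j : Fin 8, if fXc j = true ∧ fYc false j = true ∧ fYc true j = false then q j else 0)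
      = q 6 := by
  simp (config := { decide := true }) [Fin.sum_univ_eight, fXc, fYc]


lemma sum16 (f : Fin 16 → ℝ) : ∑ k, f k = f 0 + (f 1 + (f 2 + (f 3 + (f 4 + (f 5 + (f 6 + (f 7 + (f 8 + (f 9 + (f 10 + (f 11 + (f 12 + (f 13 + (f 14 + (f 15))))))))))))))) := by
  simp [Fin.sum_univ_succ]

lemma evC1 (q : Fin 16 → ℝ) :
    (∑ k : Fin 16, if fZc false true k = true ∧ fZc false false k = false then q k else 0)
      = q 4 + q 5 + q 6 + q 7 := by
  rw [sum16]
  simp (config := { decide := true }) [fZc]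
  ring

lemma evC2 (q : Fin 16 → ℝ) :
    (∑ k : Fin 16, if fZc true true k = true ∧ fZc true false k = false then q k else 0)
      = q 1 + q 5 + q 9 + q 13 := by
  rw [sum16]
  simp (config := { decide := true }) [fZc]
  ring

lemma evC3 (q : Fin 16 → ℝ) :
    (∑ k : Fin 16, if fZc false true k = false ∧ fZc false false k = true then q k else 0)
      = q 8 + q 9 + q 10 + q 11 := by
  rw [sum16]
  simp (config := { decide := true }) [fZc]
  ring

lemma evC4 (q : Fin 16 → ℝ) :
    (∑ k : Fin 16, if fZc true true k = false ∧ fZc true false k = true then q k else 0)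
      = q 2 + q 6 + q 10 + q 14 := by
  rw [sum16]
  simp (config := { decide := true }) [fZc]
  ring

lemma numerator (M : ReducedSCM) :
    M.P (fun u => M.Yx false u = false ∧ M.X u = true ∧ M.Y u = true)
      = qq1 M 5 * h1 (qq2 M) M.gamma + qq1 M 6 * h2 (qq2 M) M.gamma := by
  rw [factorNum]
  have e5 : Ee M true false = qq1 M 5 := by rw [← sumEe, ev5]
  have e6 : Ee M false true = qq1 M 6 := by rw [← sumEe, ev6]
  have c1 : C M false true false = qq2 M 4 + qq2 M 5 + qq2 M 6 + qq2 M 7 := by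
    rw [← sumC, evC1]
  have c2 : C M true true false = qq2 M 1 + qq2 M 5 + qq2 M 9 + qq2 M 13 := by
    rw [← sumC, evC2]
  have c3 : C M false false true = qq2 M 8 + qq2 M 9 + qq2 M 10 + qq2 M 11 := by
    rw [← sumC, evC3]
  have c4 : C M true false true = qq2 M 2 + qq2 M 6 + qq2 M 10 + qq2 M 14 := by
    rw [← sumC, evC4]
  rw [e5, e6, c1, c2, c3, c4, gs_true, gs_false]
  unfold h1 h2
  ring

section Main
variable {M : ReducedSCM} {phat : Bool × Bool × Bool × Bool → ℝ}

lemma feasible_of (hM : M.induces phat)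
    (hposXZ : ∀ x z : Bool, 0 < phatP phat (fun v => v.1 = x ∧ v.2.1 = z))
    (hposSX : ∀ s x : Bool, 0 < phatP phat (fun v => v.2.2.2 = s ∧ v.1 = x)) :
    feasible phat (qq1 M) (qq2 M) := by
  refine ⟨qq1_nonneg M, qq1_sum M, qq2_nonneg M, qq2_sum M, ?_, ?_⟩
  · intro x y z
    rw [sumA]
    unfold phatCond
    rw [I1 hM x z y, I2 hM x z, I3 hM x]
    obtain ⟨hA', hK⟩ := pos_pos (A'_nonneg M x) (K_nonneg M x z)
      (by rw [← I2 hM x z]; exact hposXZ x z)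
    field_simp
  · intro s x z
    rw [sumB]
    unfold phatCond
    rw [I4 hM z s x, I5 hM s x]
    have hpos := hposSX s x
    rw [I5 hM s x] at hpos
    obtain ⟨hgs, hA'⟩ := pos_pos (gs_nonneg M s) (A'_nonneg M x) hpos
    field_simp

lemma PN_eq (hM : M.induces phat) :
    M.PN = (qq1 M 5 * h1 (qq2 M) (phatP phat (fun v => v.2.2.2 = true))
            + qq1 M 6 * h2 (qq2 M) (phatP phat (fun v => v.2.2.2 = true)))
           / phatP phat (fun v => v.1 = true ∧ v.2.2.1 = true) := by
  unfold ReducedSCM.PN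
  rw [numerator M, I7 hM, I6 hM]

end Main


lemma exists_scm {phat : Bool × Bool × Bool × Bool → ℝ} (M0 : ReducedSCM)
    (hM0 : M0.induces phat)
    (hposXZ : ∀ x z : Bool, 0 < phatP phat (fun v => v.1 = x ∧ v.2.1 = z))
    (hposSX : ∀ s x : Bool, 0 < phatP phat (fun v => v.2.2.2 = s ∧ v.1 = x))
    (q1 : Fin 8 → ℝ) (q2 : Fin 16 → ℝ) (hfeas : feasible phat q1 q2) :
    ∃ M : ReducedSCM, M.induces phat ∧
      M.PN = (q1 5 * h1 q2 (phatP phat (fun v => v.2.2.2 = true))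
              + q1 6 * h2 q2 (phatP phat (fun v => v.2.2.2 = true)))
             / phatP phat (fun v => v.1 = true ∧ v.2.2.1 = true) := by
  obtain ⟨hq1n, hq1s, hq2n, hq2s, hc1, hc2⟩ := hfeas
  have hγ : phatP phat (fun v => v.2.2.2 = true) = M0.gamma := I6 hM0
  set γ := phatP phat (fun v => v.2.2.2 = true) with hγdef
  have hγ0 : 0 ≤ γ := hγ ▸ M0.gamma_nonneg
  have hγ1 : γ ≤ 1 := hγ ▸ M0.gamma_le_one
  let Mc : ReducedSCM :=
    { U1 := Fin 8, U2 := Fin 16, p1 := q1, p2 := q2, gamma := γ,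
      p1_nonneg := hq1n, p2_nonneg := hq2n, p1_sum := hq1s, p2_sum := hq2s,
      gamma_nonneg := hγ0, gamma_le_one := hγ1, fX := fXc, fZ := fZc, fY := fYc }
  have hindc : Mc.induces phat := by
    intro x z y s
    rw [factor]
    have hA : A Mc x z y
        = phatCond phat (fun v => v.2.2.1 = y) (fun v => v.1 = x ∧ v.2.1 = z)
          * phatP phat (fun v => v.1 = x) := hc1 x y z
    have hB : B Mc s x z
        = phatCond phat (fun v => v.2.1 = z) (fun v => v.2.2.2 = s ∧ v.1 = x) := hc2 s x z
    have hgs : gs Mc s = gs M0 s := by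
      cases s
      · rw [gs_false, gs_false, show Mc.gamma = γ from rfl, hγ]
      · rw [gs_true, gs_true, show Mc.gamma = γ from rfl, hγ]
    rw [hA, hB, hgs, phat_val hM0 x z y s]
    unfold phatCond
    rw [I1 hM0 x z y, I2 hM0 x z, I3 hM0 x, I4 hM0 z s x, I5 hM0 s x]
    obtain ⟨hA', hK⟩ := pos_pos (A'_nonneg M0 x) (K_nonneg M0 x z)
      (by rw [← I2 hM0 x z]; exact hposXZ x z)
    have hpos := hposSX s x
    rw [I5 hM0 s x] at hpos
    obtain ⟨hgs0, _⟩ := pos_pos (gs_nonneg M0 s) (A'_nonneg M0 x) hpos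
    field_simp
  refine ⟨Mc, hindc, ?_⟩
  have hqq1 : qq1 Mc = q1 := by
    funext j
    have ht : ∀ u : Fin 8, t1 Mc u = u := by intro u; fin_cases u <;> rfl
    unfold qq1
    exact (Finset.sum_congr rfl fun u _ => by rw [ht u]).trans (Fintype.sum_ite_eq' j _)
  have hqq2 : qq2 Mc = q2 := by
    funext k
    have ht : ∀ u : Fin 16, t2 Mc u = u := by intro u; fin_cases u <;> rfl
    unfold qq2
    exact (Finset.sum_congr rfl fun u _ => by rw [ht u]).trans (Fintype.sum_ite_eq' k _)
  rw [PN_eq hindc, hqq1, hqq2]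

end PNaux


/-- If `p̂` is the joint distribution of `(X, Z, Y, S)` of some
reduced SCM, with `p̂(X = x, Z = z) > 0`, `p̂(S = s, X = x) > 0` for all
`x, z, s`, `p̂(X = 1, Y = 1) > 0`, and `γ = p̂(S = 1)`, then the set of PN
values attained by reduced SCMs inducing `p̂` is exactly the set of values of
`(q1_5·h1 + q1_6·h2) / p̂(X = 1, Y = 1)` over the feasible region. -/
theorem PN_values_eq_bilinear_program
    (phat : Bool × Bool × Bool × Bool → ℝ)
    (hind : ∃ M0 : ReducedSCM, M0.induces phat)
    (hposXZ : ∀ x z : Bool, 0 < phatP phat (fun v => v.1 = x ∧ v.2.1 = z))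
    (hposSX : ∀ s x : Bool, 0 < phatP phat (fun v => v.2.2.2 = s ∧ v.1 = x))
    (hposXY : 0 < phatP phat (fun v => v.1 = true ∧ v.2.2.1 = true)) :
    {r : ℝ | ∃ M : ReducedSCM, M.induces phat ∧ M.PN = r}
      = {r : ℝ | ∃ (q1 : Fin 8 → ℝ) (q2 : Fin 16 → ℝ), feasible phat q1 q2 ∧
          r = (q1 5 * h1 q2 (phatP phat (fun v => v.2.2.2 = true))
               + q1 6 * h2 q2 (phatP phat (fun v => v.2.2.2 = true)))
              / phatP phat (fun v => v.1 = true ∧ v.2.2.1 = true)} := by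
  obtain ⟨M0, hM0⟩ := hind
  ext r
  simp only [Set.mem_setOf_eq]
  constructor
  · rintro ⟨M, hM, rfl⟩
    exact ⟨PNaux.qq1 M, PNaux.qq2 M, PNaux.feasible_of hM hposXZ hposSX, PNaux.PN_eq hM⟩
  · rintro ⟨q1, q2, hfeas, rfl⟩
    obtain ⟨M, hMi, hPN⟩ := PNaux.exists_scm M0 hM0 hposXZ hposSX q1 q2 hfeas
    exact ⟨M, hMi, hPN⟩
end
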